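/- Let R be a commutative ring with an ultrametric norm ‖·‖ bounded by 1, and let f ∈ HahnSeries ℝ≥0 R be a nonzero Hahn series. Then the function ρ ↦ |f|_ρ, sending ρ to the Gauss norm of f of radius ρ, is continuous on the interval (0,1]. -/
import Mathlib

open scoped NNReal

/-- The Gauss norm of radius `ρ` of a Hahn (Mal'cev–Neumann) series
`f = Σ aᵢ tⁱ ∈ HahnSeries ℝ≥0 R`, with respect to a norm `n` on `R`:
`|f|_ρ = sup_{i ∈ supp f} n(aᵢ)·ρ^i` (with `|0|_ρ = 0`, since `sSup ∅ = 0` in `ℝ`). -/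
noncomputable def gaussNorm {R : Type} [CommRing R] (n : R → ℝ) (ρ : ℝ)
    (f : HahnSeries ℝ≥0 R) : ℝ :=
  sSup ((fun i : ℝ≥0 => n (f.coeff i) * ρ ^ (i : ℝ)) '' f.support)

/-- for a nonzero Mal'cev–Neumann series `f ∈ HahnSeries ℝ≥0 R` over a
commutative ring `R` with an ultrametric norm bounded by `1`, the Gauss norms
`ρ ↦ |f|_ρ` form a continuous family on `(0,1]`. -/
theorem gaussNorm_continuousOn
    (R : Type) [CommRing R] (n : R → ℝ)
    (hnonneg : ∀ a : R, 0 ≤ n a)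
    (hzero : ∀ a : R, n a = 0 ↔ a = 0)
    (hmul : ∀ a b : R, n (a * b) ≤ n a * n b)
    (hadd : ∀ a b : R, n (a + b) ≤ max (n a) (n b))
    (hbd : ∀ a : R, n a ≤ 1)
    (f : HahnSeries ℝ≥0 R) (hf : f ≠ 0) :
    ContinuousOn (fun ρ : ℝ => gaussNorm n ρ f) (Set.Ioc (0 : ℝ) 1) := by
  set S : ℝ → Set ℝ := fun ρ => (fun i : ℝ≥0 => n (f.coeff i) * ρ ^ (i : ℝ)) '' f.support
    with hS
  have hsupp : f.support.Nonempty := HahnSeries.support_nonempty_iff.2 hf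
  have hSne : ∀ ρ : ℝ, (S ρ).Nonempty := fun ρ => hsupp.image _
  -- elements of S ρ are in [0,1] for ρ ∈ [0,1]
  have hmem_le_one : ∀ ρ : ℝ, 0 ≤ ρ → ρ ≤ 1 → ∀ x ∈ S ρ, x ≤ 1 := by
    rintro ρ h0 h1 x ⟨i, _, rfl⟩
    have h2 : (ρ : ℝ) ^ (i : ℝ) ≤ 1 := Real.rpow_le_one h0 h1 i.coe_nonneg
    have h3 : (0 : ℝ) ≤ ρ ^ (i : ℝ) := Real.rpow_nonneg h0 _
    show n (f.coeff i) * ρ ^ (i : ℝ) ≤ 1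
    nlinarith [hbd (f.coeff i), hnonneg (f.coeff i)]
  have hbdd : ∀ ρ : ℝ, 0 ≤ ρ → ρ ≤ 1 → BddAbove (S ρ) :=
    fun ρ h0 h1 => ⟨1, fun x hx => hmem_le_one ρ h0 h1 x hx⟩
  -- positivity of the Gauss norm
  have hpos : ∀ ρ : ℝ, 0 < ρ → ρ ≤ 1 → 0 < sSup (S ρ) := by
    intro ρ h0 h1
    obtain ⟨i, hi⟩ := hsupp
    have hc : f.coeff i ≠ 0 := hi
    have hn : 0 < n (f.coeff i) :=
      lt_of_le_of_ne (hnonneg _) (fun h => hc ((hzero _).1 h.symm))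
    have hx : 0 < n (f.coeff i) * ρ ^ (i : ℝ) :=
      mul_pos hn (Real.rpow_pos_of_pos h0 _)
    exact lt_of_lt_of_le hx (le_csSup (hbdd ρ h0.le h1) ⟨i, hi, rfl⟩)
  -- monotonicity
  have hmono : ∀ ρ ρ' : ℝ, 0 ≤ ρ → ρ ≤ ρ' → ρ' ≤ 1 → sSup (S ρ) ≤ sSup (S ρ') := by
    intro ρ ρ' h0 hle h1
    refine csSup_le (hSne ρ) ?_
    rintro x ⟨i, hi, rfl⟩
    refine le_trans ?_ (le_csSup (hbdd ρ' (h0.trans hle) h1) ⟨i, hi, rfl⟩)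
    exact mul_le_mul_of_nonneg_left (Real.rpow_le_rpow h0 hle i.coe_nonneg) (hnonneg _)
  -- the key interpolation estimate : g (ρ^t) ≤ (g ρ)^t
  have hkey : ∀ ρ t : ℝ, 0 < ρ → ρ ≤ 1 → 0 ≤ t → t ≤ 1 →
      sSup (S (ρ ^ t)) ≤ sSup (S ρ) ^ t := by
    intro ρ t h0 h1 ht0 ht1
    refine csSup_le (hSne _) ?_
    rintro x ⟨i, hi, rfl⟩
    have hc0 : 0 ≤ n (f.coeff i) := hnonneg _
    have hρi : (0:ℝ) ≤ ρ ^ (i : ℝ) := (Real.rpow_pos_of_pos h0 _).le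
    have e1 : (ρ ^ t) ^ (i : ℝ) = (ρ ^ (i : ℝ)) ^ t := by
      rw [← Real.rpow_mul h0.le, mul_comm, Real.rpow_mul h0.le]
    have e2 : n (f.coeff i) = n (f.coeff i) ^ (1 - t) * n (f.coeff i) ^ t := by
      rw [← Real.rpow_add' hc0 (by norm_num), sub_add_cancel, Real.rpow_one]
    calc n (f.coeff i) * (ρ ^ t) ^ (i : ℝ)
        = n (f.coeff i) ^ (1 - t) * (n (f.coeff i) ^ t * (ρ ^ (i : ℝ)) ^ t) := by
          rw [e1, ← mul_assoc, ← e2]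
      _ = n (f.coeff i) ^ (1 - t) * (n (f.coeff i) * ρ ^ (i : ℝ)) ^ t := by
          rw [Real.mul_rpow hc0 hρi]
      _ ≤ 1 * (sSup (S ρ)) ^ t := by
          apply mul_le_mul
          · exact Real.rpow_le_one hc0 (hbd _) (by linarith)
          · exact Real.rpow_le_rpow (mul_nonneg hc0 hρi)
              (le_csSup (hbdd ρ h0.le h1) ⟨i, hi, rfl⟩) ht0
          · exact Real.rpow_nonneg (mul_nonneg hc0 hρi) t
          · norm_num
      _ = (sSup (S ρ)) ^ t := one_mul _
  -- main proof
  intro ρ0 hρ0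
  obtain ⟨hρ0p, hρ0le⟩ := hρ0
  have : ∀ ρ, gaussNorm n ρ f = sSup (S ρ) := fun _ => rfl
  simp only [ContinuousWithinAt, this]
  rw [tendsto_order]
  constructor
  · -- lower bound: lower semicontinuity
    intro b hb
    obtain ⟨x, ⟨i, hi, rfl⟩, hbx⟩ := exists_lt_of_lt_csSup (hSne ρ0) hb
    have hcont : ContinuousAt (fun ρ : ℝ => n (f.coeff i) * ρ ^ (i : ℝ)) ρ0 :=
      continuousAt_const.mul (Real.continuousAt_rpow_const ρ0 _ (Or.inl hρ0p.ne'))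
    have hev : ∀ᶠ ρ in nhdsWithin ρ0 (Set.Ioc (0:ℝ) 1), b < n (f.coeff i) * ρ ^ (i:ℝ) :=
      (hcont.eventually_const_lt hbx).filter_mono nhdsWithin_le_nhds
    filter_upwards [hev, self_mem_nhdsWithin] with ρ h1 h2
    exact lt_of_lt_of_le h1 (le_csSup (hbdd ρ h2.1.le h2.2) ⟨i, hi, rfl⟩)
  · -- upper bound
    intro b hb
    rcases eq_or_lt_of_le hρ0le with h1 | h1
    · filter_upwards [self_mem_nhdsWithin] with ρ hρ
      exact lt_of_le_of_lt (hmono ρ ρ0 hρ.1.le (h1 ▸ hρ.2) hρ0le) hb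
    · -- ρ0 < 1
      have hgpos := hpos ρ0 hρ0p hρ0le
      have hφcont : ContinuousAt (fun ρ : ℝ => sSup (S ρ0) ^ Real.logb ρ0 ρ) ρ0 := by
        apply (Real.continuousAt_const_rpow hgpos.ne').comp
        exact (Real.continuousAt_log hρ0p.ne').div_const _
      have hφρ0 : sSup (S ρ0) ^ Real.logb ρ0 ρ0 = sSup (S ρ0) := by
        rw [Real.logb, div_self (Real.log_neg hρ0p h1).ne, Real.rpow_one]
      have hev : ∀ᶠ ρ in nhds ρ0, sSup (S ρ0) ^ Real.logb ρ0 ρ < b := by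
        apply hφcont.eventually_lt_const
        show sSup (S ρ0) ^ Real.logb ρ0 ρ0 < b
        rw [hφρ0]; exact hb
      filter_upwards [hev.filter_mono nhdsWithin_le_nhds, self_mem_nhdsWithin]
        with ρ h2 h3
      rcases le_or_gt ρ ρ0 with h4 | h4
      · exact lt_of_le_of_lt (hmono ρ ρ0 h3.1.le h4 hρ0le) hb
      · -- ρ0 < ρ ≤ 1
        set t := Real.logb ρ0 ρ with hts
        have hlog0 : Real.log ρ0 < 0 := Real.log_neg hρ0p h1
        have hlogρ : Real.log ρ ≤ 0 := Real.log_nonpos h3.1.le h3.2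
        have hloglt : Real.log ρ0 < Real.log ρ := Real.log_lt_log hρ0p h4
        have ht0 : 0 ≤ t := div_nonneg_iff.2 (Or.inr ⟨hlogρ, hlog0.le⟩)
        have ht1 : t ≤ 1 := by
          rw [hts, Real.logb, div_le_one_iff]
          exact Or.inr (Or.inr ⟨hlog0, hloglt.le⟩)
        have hρeq : ρ0 ^ t = ρ := Real.rpow_logb hρ0p h1.ne h3.1
        calc sSup (S ρ) = sSup (S (ρ0 ^ t)) := by rw [hρeq]
          _ ≤ sSup (S ρ0) ^ t := hkey ρ0 t hρ0p hρ0le ht0 ht1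
          _ < b := h2
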